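/- Let K be a field, n > 1, and a ∈ K[s]^n a nonzero row vector. Suppose u_1,...,u_{n-1} are nonzero elements of syz(a) that generate syz(a) as a K[s]-module and whose leading vectors LV(u_1),...,LV(u_{n-1}) are linearly independent over K. Then there exists a nonzero constant α ∈ K such that the outer product of u_1,...,u_{n-1} equals α · (a/gcd(a))^T. -/

import Mathlib

open Polynomial
open scoped Classical

noncomputable section

/-- The degree of a polynomial vector: the maximum of the degrees of the entries. -/
def vdeg {K : Type*} [Field K] {n : ℕ} (h : Fin n → K[X]) : ℕ :=
  Finset.univ.sup fun i => (h i).natDegree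

/-- The leading vector of a polynomial vector: the vector of coefficients of
`s ^ (vdeg h)` in the entries. -/
def LV {K : Type*} [Field K] {n : ℕ} (h : Fin n → K[X]) : Fin n → K :=
  fun i => (h i).coeff (vdeg h)

/-- The syzygy module of a row vector `a` of polynomials. -/
def syz {K : Type*} [Field K] {n : ℕ} (a : Fin n → K[X]) :
    Submodule K[X] (Fin n → K[X]) where
  carrier := {h | ∑ i, a i * h i = 0}
  add_mem' := by
    intro x y hx hy
    simp only [Set.mem_setOf_eq] at *
    simp only [Pi.add_apply, mul_add, Finset.sum_add_distrib, hx, hy, add_zero]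
  zero_mem' := by simp
  smul_mem' := by
    intro c x hx
    simp only [Set.mem_setOf_eq] at *
    have h1 : ∑ i, a i * (c • x) i = c * ∑ i, a i * x i := by
      rw [Finset.mul_sum]
      refine Finset.sum_congr rfl fun i _ => ?_
      simp only [Pi.smul_apply, smul_eq_mul]
      ring
    rw [h1, hx, mul_zero]

/-- The coefficient matrix `A ∈ K^{(2d+1) × n(d+1)}` associated with a polynomial row
vector `a` of degree at most `d`:  `A_{k+1, i+jn} = c_{k-j,i}` where `c_m` is the vector of
coefficients of `s^m` in `a` (with `c_m = 0` for `m < 0` or `m > d`). -/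
def coefA {K : Type*} [Field K] {n : ℕ} (d : ℕ) (hn : 0 < n) (a : Fin n → K[X]) :
    Matrix (Fin (2*d+1)) (Fin (n*(d+1))) K :=
  Matrix.of fun k ℓ =>
    if (ℓ : ℕ) / n ≤ (k : ℕ) then
      (a ⟨(ℓ : ℕ) % n, Nat.mod_lt _ hn⟩).coeff ((k : ℕ) - (ℓ : ℕ) / n)
    else 0

/-- The `♭` isomorphism `K^{n(d+1)} → K[s]^n`: split `v` into `d+1` consecutive blocks
`w_0, …, w_d ∈ K^n` and form `∑_j s^j w_j`. -/
def flatv {K : Type*} [Field K] {n : ℕ} (d : ℕ) (v : Fin (n*(d+1)) → K) : Fin n → K[X] :=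
  fun i => ∑ j : Fin (d+1), C (v ⟨(i:ℕ) + (j:ℕ)*n, by
    calc (i:ℕ) + (j:ℕ)*n < n + (j:ℕ)*n := Nat.add_lt_add_right i.isLt _
      _ = n * ((j:ℕ)+1) := by ring
      _ ≤ n * (d+1) := Nat.mul_le_mul le_rfl j.isLt⟩) * X ^ (j:ℕ)

/-- The `♭` isomorphism `K^m → K[s]` for scalars. -/
def flat1 {K : Type*} [Field K] {m : ℕ} (w : Fin m → K) : K[X] :=
  ∑ k : Fin m, C (w k) * X ^ (k:ℕ)

/-- A column index `j` of a matrix is pivotal if the `j`-th column is not a `K`-linear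
combination of the columns of smaller index. -/
def Pivotal {K : Type*} [Field K] {m N : ℕ} (A : Matrix (Fin m) (Fin N) K) (j : Fin N) : Prop :=
  (fun k => A k j) ∉ Submodule.span K ((fun r : Fin N => fun k => A k r) '' {r | r < j})

/-- A basic non-pivotal index: the minimal non-pivotal index in its residue class modulo `n`. -/
def BasicNP {K : Type*} [Field K] {m N : ℕ} (n : ℕ) (A : Matrix (Fin m) (Fin N) K)
    (r : Fin N) : Prop :=
  ¬ Pivotal A r ∧ ∀ r' : Fin N, ¬ Pivotal A r' → (r':ℕ) % n = (r:ℕ) % n → r ≤ r'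

/-- `B` encodes, for each non-pivotal index `i`, the row-echelon null vector
`b_i = e_i − v_i`: `(b_i)_i = 1`, `(b_i)_j = −α_j` for pivotal `j < i` where
`A_{*i} = Σ α_j A_{*j}`, and all other entries vanish.  Equivalently, `b_i ∈ ker A`,
`(b_i)_i = 1` and `(b_i)_j = 0` unless `j = i` or `j` is pivotal with `j < i`. -/
def IsEchelonNull {K : Type*} [Field K] {m N : ℕ} (A : Matrix (Fin m) (Fin N) K)
    (B : Fin N → Fin N → K) : Prop :=
  ∀ i : Fin N, ¬ Pivotal A i →
    A.mulVec (B i) = 0 ∧ B i i = 1 ∧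
    ∀ j : Fin N, j ≠ i → ¬ (Pivotal A j ∧ j < i) → B i j = 0

/-- Shift an index by `t`, modulo the size (used only when `j + t` is in range). -/
def shiftIdx {N : ℕ} (j : Fin N) (t : ℕ) : Fin N :=
  ⟨((j:ℕ) + t) % N, Nat.mod_lt _ j.pos⟩
/-- outer product.  If `u_1, …, u_{n-1}` are nonzero syzygies that
generate `syz a` and whose leading vectors are `K`-linearly independent, then there is a
nonzero constant `α ∈ K` such that the outer product of `u_1, …, u_{n-1}` — the vector
whose `i`-th entry is `(−1)^i` times the determinant of the `(n−1)×(n−1)` matrix obtained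
from the `n×(n−1)` matrix with columns `u_1, …, u_{n-1}` by deleting the `i`-th row —
equals `α · (a / gcd a)`.  Here `g` is the monic gcd of the entries of `a`. -/
theorem mu_basis_outer_product {K : Type*} [Field K] {n : ℕ} (hn : 1 < n)
    (a : Fin n → K[X]) (ha : a ≠ 0)
    (g : K[X]) (hg : g.Monic) (hgdvd : ∀ i, g ∣ a i)
    (hgmax : ∀ c : K[X], (∀ i, c ∣ a i) → c ∣ g)
    (u : Fin (n-1) → Fin n → K[X]) (hu0 : ∀ i, u i ≠ 0)
    (humem : ∀ i, u i ∈ syz a)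
    (hspan : Submodule.span K[X] (Set.range u) = syz a)
    (hLV : LinearIndependent K fun i => LV (u i)) :
    ∃ α : K, α ≠ 0 ∧ ∀ i : Fin n,
      (-1 : K[X]) ^ ((i:ℕ)+1) *
        (Matrix.of fun r c : Fin (n-1) =>
          u c (Fin.cast (by omega : n-1+1 = n)
            ((Fin.cast (by omega : n = n-1+1) i).succAbove r))).det
      = C α * (a i / g) := by
  classical
  have e : n - 1 + 1 = n := by omega
  have hg0 : g ≠ 0 := hg.ne_zero
  have hb : ∀ i, g * (a i / g) = a i := fun i =>
    EuclideanDomain.mul_div_cancel' hg0 (hgdvd i)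
  -- `g` lies in the ideal generated by the `a i`
  have hgmem : g ∈ Submodule.span K[X] (Set.range a) := by
    obtain ⟨d, hd⟩ := Submodule.IsPrincipal.principal
      (Ideal.span (Set.range a) : Ideal K[X])
    have hda : ∀ i, d ∣ a i := by
      intro i
      have hai : a i ∈ Ideal.span (Set.range a) := Ideal.subset_span ⟨i, rfl⟩
      rw [hd] at hai
      exact Ideal.mem_span_singleton.mp hai
    have hdg : d ∣ g := hgmax d hda
    show g ∈ Ideal.span (Set.range a)
    rw [hd]
    exact Ideal.mem_span_singleton.mpr hdg
  obtain ⟨h0, hh0⟩ := (Submodule.mem_span_range_iff_exists_fun K[X]).mp hgmem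
  have hh0' : ∑ i, a i * h0 i = g := by
    rw [← hh0]; exact Finset.sum_congr rfl fun i _ => mul_comm _ _
  -- the standard decompositions
  have htsyz : ∀ j : Fin n, (Pi.single j 1 - (a j / g) • h0) ∈ syz a := by
    intro j
    show ∑ i, a i * ((Pi.single j 1 : Fin n → K[X]) - (a j / g) • h0) i = 0
    have hterm : ∀ i, a i * ((Pi.single j 1 : Fin n → K[X]) - (a j / g) • h0) i
        = a i * (Pi.single j 1 : Fin n → K[X]) i - (a j / g) * (a i * h0 i) := by
      intro i
      simp only [Pi.sub_apply, Pi.smul_apply, smul_eq_mul]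
      ring
    rw [Finset.sum_congr rfl fun i _ => hterm i, Finset.sum_sub_distrib,
      ← Finset.mul_sum, hh0']
    have h1 : ∑ i, a i * (Pi.single j 1 : Fin n → K[X]) i = a j := by
      rw [Finset.sum_eq_single j]
      · simp
      · intro i _ hij; simp [Pi.single_eq_of_ne hij]
      · simp
    rw [h1, mul_comm, hb j, sub_self]
  have hdec : ∀ j : Fin n, ∃ q : Fin (n-1) → K[X],
      ∑ k, q k • u k = Pi.single j 1 - (a j / g) • h0 := by
    intro j
    have hj := htsyz j
    rw [← hspan] at hj
    exact (Submodule.mem_span_range_iff_exists_fun K[X]).mp hj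
  choose p hp using hdec
  -- the square matrix with first column `w` and remaining columns `u k`
  set D : (Fin n → K[X]) → Matrix (Fin (n-1+1)) (Fin (n-1+1)) K[X] :=
    fun w => Matrix.of fun i j =>
      Fin.cases (w (Fin.cast e i)) (fun k => u k (Fin.cast e i)) j with hDdef
  have hDup : ∀ w : Fin n → K[X],
      D w = (D 0).updateCol 0 (fun i => w (Fin.cast e i)) := by
    intro w
    ext i j
    rcases Fin.eq_zero_or_eq_succ j with rfl | ⟨k, rfl⟩
    · simp [hDdef, Matrix.updateCol_apply]
    · simp [hDdef, Matrix.updateCol_apply, Fin.succ_ne_zero]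
  -- determinant as a linear map in the first column
  set L : (Fin n → K[X]) →ₗ[K[X]] K[X] :=
    { toFun := fun w => (D w).det
      map_add' := by
        intro x y
        show (D (x + y)).det = (D x).det + (D y).det
        rw [hDup x, hDup y, hDup (x + y)]
        exact Matrix.det_updateCol_add (D 0) 0
          (fun i => x (Fin.cast e i)) (fun i => y (Fin.cast e i))
      map_smul' := by
        intro c x
        show (D (c • x)).det = c * (D x).det
        rw [hDup x, hDup (c • x)]
        exact Matrix.det_updateCol_smul (D 0) 0 c
          (fun i => x (Fin.cast e i)) } with hLdef
  have hLu : ∀ k, L (u k) = 0 := by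
    intro k
    refine Matrix.det_zero_of_column_eq (M := D (u k))
      (Fin.succ_ne_zero k).symm (fun r => ?_)
    simp [hDdef]
  have hLsingle : ∀ j : Fin n, L (Pi.single j 1) = (a j / g) * L h0 := by
    intro j
    have hsum : (Pi.single j 1 : Fin n → K[X])
        = (a j / g) • h0 + ∑ k, p j k • u k := by
      rw [hp j]; abel
    rw [hsum, map_add, map_smul, map_sum, smul_eq_mul]
    have hz : ∀ k ∈ Finset.univ, L (p j k • u k) = 0 := by
      intro k _
      rw [map_smul, hLu k, smul_zero]
    rw [Finset.sum_congr rfl hz, Finset.sum_const_zero, add_zero]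
  -- cofactor expansion at a standard basis vector
  have hsingle_det : ∀ j : Fin n, L (Pi.single j 1)
      = (-1 : K[X]) ^ (j : ℕ) *
        (Matrix.of fun r c : Fin (n-1) =>
          u c (Fin.cast e ((Fin.cast e.symm j).succAbove r))).det := by
    intro j
    show (D (Pi.single j 1)).det = _
    rw [Matrix.det_succ_column_zero]
    rw [Finset.sum_eq_single (Fin.cast e.symm j)]
    · have h00 : D (Pi.single j 1) (Fin.cast e.symm j) 0 = 1 := by
        simp [hDdef]
      rw [h00, mul_one]
      have hmat : (D (Pi.single j 1)).submatrix (Fin.cast e.symm j).succAbove Fin.succ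
          = Matrix.of fun r c : Fin (n-1) =>
            u c (Fin.cast e ((Fin.cast e.symm j).succAbove r)) := by
        ext r c
        simp [hDdef, Matrix.submatrix_apply]
      rw [hmat, Fin.coe_cast]
    · intro r _ hr
      have hne : Fin.cast e r ≠ j := by
        intro hcontra
        apply hr
        subst hcontra
        simp
      have h0r : D (Pi.single j 1) r 0 = 0 := by
        simp [hDdef, Pi.single_eq_of_ne hne]
      rw [h0r, mul_zero, zero_mul]
    · simp
  -- the right inverse matrix
  set P : Matrix (Fin (n-1+1)) (Fin (n-1+1)) K[X] :=
    Matrix.of fun k j =>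
      Fin.cases (a (Fin.cast e j) / g) (fun r => p (Fin.cast e j) r) k with hPdef
  have hDP : D h0 * P = 1 := by
    ext i j
    rw [Matrix.mul_apply, Fin.sum_univ_succ]
    have key := congrFun (hp (Fin.cast e j)) (Fin.cast e i)
    simp only [Finset.sum_apply, Pi.smul_apply, smul_eq_mul, Pi.sub_apply] at key
    simp only [hDdef, hPdef, Matrix.of_apply, Fin.cases_zero, Fin.cases_succ]
    rw [show (∑ r : Fin (n-1), u r (Fin.cast e i) * p (Fin.cast e j) r)
        = ∑ r : Fin (n-1), p (Fin.cast e j) r * u r (Fin.cast e i) from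
        Finset.sum_congr rfl fun r _ => mul_comm _ _, key]
    have hij : (Fin.cast e i = Fin.cast e j) ↔ (i = j) := by
      constructor
      · intro h; exact Fin.cast_injective _ h
      · intro h; rw [h]
    rw [Pi.single_apply, Matrix.one_apply]
    by_cases h : i = j
    · simp only [h, if_pos rfl, hij.mpr h |> if_pos]
      ring
    · have hne2 : ¬ (Fin.cast e i = Fin.cast e j) := fun hc => h (hij.mp hc)
      simp only [if_neg h, if_neg hne2]
      ring
  have hunit : IsUnit (D h0).det := by
    refine IsUnit.of_mul_eq_one P.det ?_
    rw [← Matrix.det_mul, hDP, Matrix.det_one]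
  obtain ⟨r, hr, hCr⟩ := Polynomial.isUnit_iff.mp hunit
  refine ⟨-r, neg_ne_zero.mpr hr.ne_zero, ?_⟩
  intro i
  have hfin : (-1 : K[X]) ^ ((i:ℕ)+1) *
      (Matrix.of fun r' c : Fin (n-1) =>
        u c (Fin.cast e ((Fin.cast e.symm i).succAbove r'))).det
      = C (-r) * (a i / g) := by
    have h1 := hsingle_det i
    have h2 := hLsingle i
    have h3 : (a i / g) * L h0 = (-1 : K[X]) ^ ((i:ℕ)) *
        (Matrix.of fun r' c : Fin (n-1) =>
          u c (Fin.cast e ((Fin.cast e.symm i).succAbove r'))).det := by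
      rw [← h2, h1]
    have hLh0 : L h0 = C r := hCr.symm
    rw [hLh0] at h3
    rw [map_neg, pow_succ]
    calc ((-1 : K[X]) ^ (i:ℕ) * -1) *
        (Matrix.of fun r' c : Fin (n-1) =>
          u c (Fin.cast e ((Fin.cast e.symm i).succAbove r'))).det
        = -((-1 : K[X]) ^ (i:ℕ) *
          (Matrix.of fun r' c : Fin (n-1) =>
            u c (Fin.cast e ((Fin.cast e.symm i).succAbove r'))).det) := by ring
      _ = -((a i / g) * C r) := by rw [← h3]
      _ = -C r * (a i / g) := by ring
  exact hfin
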